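/- There exists a constant c₇ depending only on d and κ such that whenever L₀ ≥ c₇, the chosen scales satisfy, for all k ≥ 0, N_{k+1}^{3(d−1)} · κ^{u_{k+1} L_{k+1}/3} ≤ 1. -/

import Mathlib

noncomputable section

open Real Filter

/-- `fseq 0 x = 1`, `fseq 1 x = 8 ^ x`, and `fseq (k+1) = fseq k ∘ fseq 1` for `k ≥ 1`. -/
noncomputable def fseq : ℕ → ℝ → ℝ
  | 0, _ => 1
  | 1, x => (8 : ℝ) ^ x
  | (k+2), x => fseq (k+1) ((8 : ℝ) ^ x)

/-- `u₀ = 3(d-1)/(L₀ log(1/κ))`. -/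
noncomputable def u0 (d : ℕ) (L₀ κ : ℝ) : ℝ := 3 * ((d : ℝ) - 1) / (L₀ * Real.log (1 / κ))

/-- `u_k = u₀ v^{-k}` with `v = 8`. -/
noncomputable def useq (d : ℕ) (L₀ κ : ℝ) (k : ℕ) : ℝ := u0 d L₀ κ / 8 ^ k

/-- The chosen scales `N_k = (α c₁/u₀) f_{[(k+2)/2]}([(k+1)/2]) / f_{[(k+1)/2]}([k/2])`,
with `α = 240`. -/
noncomputable def Nscale (c₁ u₀ : ℝ) (k : ℕ) : ℝ :=
  (240 * c₁ / u₀) * fseq ((k+2)/2) (((k+1)/2 : ℕ) : ℝ) / fseq ((k+1)/2) ((k/2 : ℕ) : ℝ)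

/-- The chosen scales `L_k = f_{[(k+1)/2]}([k/2]) (α c₁/u₀)^k L₀`. -/
noncomputable def Lscale (c₁ u₀ L₀ : ℝ) (k : ℕ) : ℝ :=
  fseq ((k+1)/2) ((k/2 : ℕ) : ℝ) * (240 * c₁ / u₀) ^ k * L₀

/-- The transversal scales `L̃_0 = L̃₀`, `L̃_{k+1} = N_k³ L̃_k`. -/
noncomputable def Ltscale (c₁ u₀ Lt₀ : ℝ) : ℕ → ℝ
  | 0 => Lt₀
  | (k+1) => (Nscale c₁ u₀ k) ^ 3 * Ltscale c₁ u₀ Lt₀ k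


lemma fseq_mono : ∀ k : ℕ, Monotone (fseq k)
  | 0 => monotone_const
  | 1 => fun x y h => Real.rpow_le_rpow_of_exponent_le (by norm_num) h
  | (k+2) => fun x y h =>
      fseq_mono (k+1) (Real.rpow_le_rpow_of_exponent_le (by norm_num) h)

lemma one_le_fseq : ∀ (k : ℕ) (x : ℝ), 0 ≤ x → 1 ≤ fseq k x
  | 0, _, _ => le_refl 1
  | 1, x, hx => by
      have := Real.rpow_le_rpow_of_exponent_le (by norm_num : (1:ℝ) ≤ 8) hx
      exact (by simpa using this : (1:ℝ) ≤ (8:ℝ) ^ x)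
  | (k+2), x, _ => one_le_fseq (k+1) _ (Real.rpow_nonneg (by norm_num) _)

lemma fseq_comm : ∀ (k : ℕ), 1 ≤ k → ∀ x : ℝ, fseq k ((8:ℝ) ^ x) = (8:ℝ) ^ fseq k x
  | 0, h, _ => by omega
  | 1, _, x => rfl
  | (k+2), _, x => by
      show fseq (k+1) ((8:ℝ) ^ (8:ℝ) ^ x) = (8:ℝ) ^ fseq (k+1) ((8:ℝ) ^ x)
      exact fseq_comm (k+1) (Nat.le_add_left 1 k) _

lemma x_add_one_le (x : ℝ) (hx : 0 ≤ x) : x + 1 ≤ (8:ℝ) ^ x := by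
  have h8 : (8:ℝ) ^ x = Real.exp (Real.log 8 * x) := by
    rw [Real.rpow_def_of_pos (by norm_num)]
  have hlog : (1:ℝ) ≤ Real.log 8 := by
    rw [Real.le_log_iff_exp_le (by norm_num)]
    calc Real.exp 1 ≤ 2.7182818286 := Real.exp_one_lt_d9.le
    _ ≤ 8 := by norm_num
  have h2 := Real.add_one_le_exp (Real.log 8 * x)
  rw [h8]
  nlinarith

lemma fseq_step : ∀ (k : ℕ), 1 ≤ k → ∀ x : ℝ, 0 ≤ x → fseq k (x+1) ≤ (8:ℝ) ^ fseq k x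
  | 0, h, _, _ => by omega
  | 1, _, x, hx => Real.rpow_le_rpow_of_exponent_le (by norm_num) (x_add_one_le x hx)
  | (k+2), _, x, hx => by
      show fseq (k+1) ((8:ℝ) ^ (x+1)) ≤ (8:ℝ) ^ fseq (k+2) x
      have h1 : (8:ℝ)^(x+1) ≤ (8:ℝ)^((8:ℝ)^x) :=
        Real.rpow_le_rpow_of_exponent_le (by norm_num) (x_add_one_le x hx)
      calc fseq (k+1) ((8:ℝ)^(x+1)) ≤ fseq (k+1) ((8:ℝ)^((8:ℝ)^x)) := fseq_mono _ h1
        _ = (8:ℝ) ^ fseq (k+1) ((8:ℝ)^x) := fseq_comm (k+1) (by omega) _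
        _ = (8:ℝ) ^ fseq (k+2) x := rfl

noncomputable def Fv (m : ℕ) : ℝ := fseq ((m+1)/2) ((m/2 : ℕ) : ℝ)

lemma one_le_Fv (m : ℕ) : 1 ≤ Fv m := one_le_fseq _ _ (Nat.cast_nonneg _)

lemma Fv_step (k : ℕ) : Fv (k+2) ≤ (8:ℝ) ^ Fv (k+1) := by
  rcases Nat.even_or_odd k with ⟨j, rfl⟩ | ⟨j, rfl⟩
  · have h1 : (j + j + 2 + 1)/2 = j + 1 := by omega
    have h2 : (j + j + 2)/2 = j + 1 := by omega
    have h4 : (j + j + 1)/2 = j := by omega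
    unfold Fv
    rw [h1, h2, h4]
    have hc : ((j+1 : ℕ) : ℝ) = (j : ℝ) + 1 := by push_cast; ring
    rw [hc]
    exact fseq_step (j+1) (by omega) _ (Nat.cast_nonneg _)
  · have h1 : (2*j + 1 + 2 + 1)/2 = j + 2 := by omega
    have h2 : (2*j + 1 + 2)/2 = j + 1 := by omega
    have h4 : (2*j + 1 + 1)/2 = j + 1 := by omega
    unfold Fv
    rw [h1, h2, h4]
    have : fseq (j+2) ((j+1 : ℕ) : ℝ) = (8:ℝ) ^ fseq (j+1) ((j+1 : ℕ) : ℝ) := by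
      show fseq (j+1) ((8:ℝ) ^ ((j+1:ℕ):ℝ)) = _
      exact fseq_comm (j+1) (by omega) _
    exact this.le

lemma Nscale_eq (c u : ℝ) (k : ℕ) : Nscale c u k = (240 * c / u) * Fv (k+1) / Fv k := rfl
lemma Lscale_eq (c u L₀ : ℝ) (k : ℕ) : Lscale c u L₀ k = Fv k * (240 * c / u) ^ k * L₀ := rfl


set_option maxHeartbeats 1000000 in
/-- There is a constant `c₇ = c₇(d,κ)` such that for `L₀ ≥ c₇` the chosen scales satisfy
`N_{k+1}^{3(d-1)} κ^{u_{k+1} L_{k+1}/3} ≤ 1` for all `k ≥ 0`. -/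
theorem Nscale_kappa_bound (d : ℕ) (hd : 2 ≤ d) (κ : ℝ) (hκ0 : 0 < κ) (hκ1 : κ < 1) :
    ∃ c₇ : ℝ, ∀ L₀ : ℝ, c₇ ≤ L₀ → ∀ k : ℕ,
      (Nscale (Real.sqrt d) (u0 d L₀ κ) (k + 1)) ^ (3 * (d - 1)) *
          κ ^ (useq d L₀ κ (k + 1) * Lscale (Real.sqrt d) (u0 d L₀ κ) L₀ (k + 1) / 3) ≤ 1 := by
  have hd1 : (1:ℝ) ≤ (d:ℝ) - 1 := by
    have : (2:ℝ) ≤ (d:ℝ) := by exact_mod_cast hd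
    linarith
  set D : ℝ := (d:ℝ) - 1 with hD
  have hDpos : 0 < D := by linarith
  have hΛ : 0 < Real.log (1/κ) := by
    rw [one_div, Real.log_inv]
    have := Real.log_neg hκ0 hκ1; linarith
  set Λ : ℝ := Real.log (1/κ) with hΛdef
  refine ⟨max 1 (300 * D / Λ), fun L₀ hL₀ k => ?_⟩
  have hL₀1 : (1:ℝ) ≤ L₀ := le_trans (le_max_left _ _) hL₀
  have hL₀pos : 0 < L₀ := by linarith
  have h300 : 300 * D ≤ L₀ * Λ := by
    have h := le_trans (le_max_right _ _) hL₀
    rw [div_le_iff₀ hΛ] at h; linarith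
  have hLΛpos : 0 < L₀ * Λ := by positivity
  set c₁ : ℝ := Real.sqrt d with hc₁def
  have hc₁ : 1 ≤ c₁ := by
    rw [hc₁def, show (1:ℝ) = Real.sqrt 1 from Real.sqrt_one.symm]
    exact Real.sqrt_le_sqrt (by exact_mod_cast Nat.one_le_of_lt hd)
  have hu0 : u0 d L₀ κ = 3 * D / (L₀ * Λ) := rfl
  set u : ℝ := u0 d L₀ κ with hu
  have hupos : 0 < u := by rw [hu0]; positivity
  set C : ℝ := 240 * c₁ / u with hC
  have hCval : C = 80 * c₁ * (L₀ * Λ) / D := by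
    rw [hC, hu0]; field_simp; ring
  have hC24 : 24000 ≤ C := by
    rw [hCval, le_div_iff₀ hDpos]
    nlinarith [mul_nonneg (by linarith : (0:ℝ) ≤ c₁ - 1) (le_of_lt hLΛpos)]
  have hCpos : 0 < C := by linarith
  clear_value D Λ c₁ u C
  set F1 : ℝ := Fv (k+1) with hF1def
  set F2 : ℝ := Fv (k+2) with hF2def
  have hF1 : 1 ≤ F1 := one_le_Fv _
  have hF2 : 1 ≤ F2 := one_le_Fv _
  have hF1pos : 0 < F1 := by linarith
  have hF2pos : 0 < F2 := by linarith
  clear_value F1 F2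
  -- the key log inequality
  have hlog8 : Real.log 8 ≤ 7 := by
    have := Real.log_le_sub_one_of_pos (by norm_num : (0:ℝ) < 8); linarith
  have hlogF2 : Real.log F2 ≤ F1 * Real.log 8 := by
    have h := Real.log_le_log (lt_of_lt_of_le one_pos (one_le_Fv (k+2))) (Fv_step k)
    rw [Real.log_rpow (by norm_num : (0:ℝ) < 8)] at h
    rwa [← hF2def, ← hF1def] at h
  have hsqrt : Real.sqrt C * Real.sqrt C = C := Real.mul_self_sqrt hCpos.le
  have h96 : (96:ℝ) ≤ Real.sqrt C := by
    have h1 : (96:ℝ) = Real.sqrt 9216 := by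
      rw [show (9216:ℝ) = 96^2 by norm_num, Real.sqrt_sq (by norm_num : (0:ℝ) ≤ 96)]
    rw [h1]
    exact Real.sqrt_le_sqrt (by linarith)
  have hlogC : 3 * Real.log C ≤ C / 16 := by
    have h1 : Real.log (Real.sqrt C) = Real.log C / 2 := Real.log_sqrt hCpos.le
    have h2 : Real.log (Real.sqrt C) ≤ Real.sqrt C - 1 :=
      Real.log_le_sub_one_of_pos (by nlinarith)
    nlinarith
  have key : 3 * Real.log (C * F2 / F1) ≤ F1 * (C/8)^(k+1) := by
    have hexp : Real.log (C * F2 / F1) = Real.log C + Real.log F2 - Real.log F1 := by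
      rw [Real.log_div (by positivity) (by positivity),
        Real.log_mul (by positivity) (by positivity)]
    have hlogF1 : 0 ≤ Real.log F1 := Real.log_nonneg hF1
    have hstep1 : 3 * Real.log (C * F2 / F1) ≤ F1 * (C/8) := by
      rw [hexp]
      nlinarith [mul_le_mul_of_nonneg_left hlog8 (by linarith : (0:ℝ) ≤ F1),
        mul_le_mul_of_nonneg_left (show (21:ℝ) ≤ C/16 by linarith)
          (by linarith : (0:ℝ) ≤ F1)]
    have hpow : C/8 ≤ (C/8)^(k+1) := le_self_pow₀ (by linarith) (Nat.succ_ne_zero k)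
    calc 3 * Real.log (C * F2 / F1) ≤ F1 * (C/8) := hstep1
      _ ≤ F1 * (C/8)^(k+1) := by
          exact mul_le_mul_of_nonneg_left hpow (by linarith)
  -- rewrite the goal
  rw [Nscale_eq, Lscale_eq]
  rw [← hF1def, ← hF2def, ← hC]
  set E : ℝ := useq d L₀ κ (k+1) * (F1 * C^(k+1) * L₀) / 3 with hE
  clear_value E
  have huL : u * (L₀ * Λ) = 3 * D := by
    rw [hu0]; field_simp
  have hEΛ : E * Λ = D * (F1 * (C/8)^(k+1)) := by
    rw [hE, useq, ← hu, div_pow]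
    have h8 : ((8:ℝ))^(k+1) ≠ 0 := by positivity
    linear_combination (F1 * C^(k+1) / (3 * (8:ℝ)^(k+1))) * huL
  set N : ℝ := C * F2 / F1 with hN
  have hNpos : 0 < N := by rw [hN]; positivity
  have hmcast : ((3 * (d-1) : ℕ) : ℝ) = 3 * D := by
    rw [hD]
    have h1 : 1 ≤ d := by omega
    push_cast [Nat.cast_sub h1]
    ring
  have hlogN : ((3 * (d-1) : ℕ) : ℝ) * Real.log N ≤ E * Λ := by
    rw [hmcast, hEΛ]
    nlinarith [mul_le_mul_of_nonneg_left key hDpos.le]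
  have h2 : N ^ (3 * (d-1)) ≤ Real.exp (E * Λ) := by
    rw [← Real.exp_log (pow_pos hNpos (3 * (d-1))), Real.log_pow]
    exact Real.exp_le_exp.mpr hlogN
  have hκE : κ ^ E = Real.exp (E * Real.log κ) := by
    rw [Real.rpow_def_of_pos hκ0, mul_comm]
  have hΛneg : Λ = -Real.log κ := by rw [hΛdef, one_div, Real.log_inv]
  calc N ^ (3 * (d-1)) * κ ^ E
      ≤ Real.exp (E * Λ) * κ ^ E := by
        exact mul_le_mul_of_nonneg_right h2 (Real.rpow_pos_of_pos hκ0 E).le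
    _ = Real.exp (E * Λ + E * Real.log κ) := by rw [hκE, ← Real.exp_add]
    _ = Real.exp 0 := by rw [hΛneg]; ring_nf
    _ = 1 := Real.exp_zero
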